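/- Let (X,ρ) be a metric space, e ∈ X, ε > 0 and γ ∈ (0,1). Let B = {x ∈ X : ρ(x,e) ≤ ε} and let (F_n)_{n≥1} be a sequence of maps F_n : B → X such that ρ(F_n(x),F_n(y)) ≤ γ·ρ(x,y) for all x,y ∈ B and all n, ρ(F_n(e),e) ≤ (1−γ)·ε for all n, and ρ(F_n(e),e) → 0 as n → ∞. Then for every z ∈ B, the iterates z₀ = z, z_n = F_n(z_{n−1}) are well defined, i.e. z_n ∈ B for all n, and z_n → e as n → ∞. -/

import Mathlib

/-- Iterates `z₀ = z`, `z_n = F_n(z_{n-1})` for `n ≥ 1`. -/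
def iterSeq {X : Type*} (F : ℕ → X → X) (z : X) : ℕ → X
  | 0 => z
  | n + 1 => F (n + 1) (iterSeq F z n)

theorem stmt7 {X : Type*} [MetricSpace X] (e : X) (ε : ℝ) (hε : 0 < ε)
    (γ : ℝ) (hγ0 : 0 < γ) (hγ1 : γ < 1) (F : ℕ → X → X)
    (hcontr : ∀ n : ℕ, 1 ≤ n → ∀ x y : X, dist x e ≤ ε → dist y e ≤ ε →
      dist (F n x) (F n y) ≤ γ * dist x y)
    (hcenter : ∀ n : ℕ, 1 ≤ n → dist (F n e) e ≤ (1 - γ) * ε)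
    (hlim : Filter.Tendsto (fun n => dist (F n e) e) Filter.atTop (nhds 0)) :
    ∀ z : X, dist z e ≤ ε →
      (∀ n : ℕ, dist (iterSeq F z n) e ≤ ε) ∧
      Filter.Tendsto (iterSeq F z) Filter.atTop (nhds e) := by
  intro z hz
  set a : ℕ → ℝ := fun n => dist (iterSeq F z n) e with ha
  have hB : ∀ n : ℕ, a n ≤ ε := by
    intro n
    induction n with
    | zero => exact hz
    | succ n ih =>
        have h1 : a (n + 1) ≤ γ * a n + dist (F (n + 1) e) e := by
          calc a (n + 1) = dist (F (n + 1) (iterSeq F z n)) e := rfl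
            _ ≤ dist (F (n + 1) (iterSeq F z n)) (F (n + 1) e) + dist (F (n + 1) e) e :=
                dist_triangle _ _ _
            _ ≤ γ * a n + dist (F (n + 1) e) e :=
                add_le_add_left
                  (hcontr (n + 1) (Nat.le_add_left 1 n) (iterSeq F z n) e ih (by simp [hε.le])) _
        have h2 : γ * a n ≤ γ * ε := mul_le_mul_of_nonneg_left ih hγ0.le
        have h3 := hcenter (n + 1) (Nat.le_add_left 1 n)
        have : γ * ε + (1 - γ) * ε = ε := by ring
        linarith
  refine ⟨hB, ?_⟩
  have hrec : ∀ n : ℕ, a (n + 1) ≤ γ * a n + dist (F (n + 1) e) e := by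
    intro n
    calc a (n + 1) = dist (F (n + 1) (iterSeq F z n)) e := rfl
      _ ≤ dist (F (n + 1) (iterSeq F z n)) (F (n + 1) e) + dist (F (n + 1) e) e :=
          dist_triangle _ _ _
      _ ≤ γ * a n + dist (F (n + 1) e) e :=
          add_le_add_left
            (hcontr (n + 1) (Nat.le_add_left 1 n) (iterSeq F z n) e (hB n) (by simp [hε.le])) _
  rw [tendsto_iff_dist_tendsto_zero]
  rw [Metric.tendsto_atTop] at hlim ⊢
  intro δ hδ
  have h1γ : 0 < 1 - γ := by linarith
  obtain ⟨N, hN⟩ := hlim ((1 - γ) * δ / 2) (by positivity)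
  have hd : ∀ n ≥ N, dist (F n e) e ≤ (1 - γ) * δ / 2 := by
    intro n hn
    have := hN n hn
    rw [Real.dist_eq, sub_zero, abs_of_nonneg dist_nonneg] at this
    exact this.le
  have key : ∀ k : ℕ, a (N + k) ≤ γ ^ k * ε + δ / 2 := by
    intro k
    induction k with
    | zero => simpa using by linarith [hB N, hδ]
    | succ k ih =>
        have h2 : a (N + k + 1) ≤ γ * a (N + k) + dist (F (N + k + 1) e) e := hrec (N + k)
        have h3 : dist (F (N + k + 1) e) e ≤ (1 - γ) * δ / 2 :=
          hd (N + k + 1) (by omega)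
        have h4 : γ * a (N + k) ≤ γ * (γ ^ k * ε + δ / 2) :=
          mul_le_mul_of_nonneg_left ih hγ0.le
        have h5 : a (N + (k + 1)) = a (N + k + 1) := by ring_nf
        have h6 : γ * (γ ^ k * ε + δ / 2) + (1 - γ) * δ / 2 = γ ^ (k + 1) * ε + δ / 2 := by
          ring
        linarith
  obtain ⟨K, hK⟩ : ∃ K : ℕ, γ ^ K * ε < δ / 2 := by
    have := tendsto_pow_atTop_nhds_zero_of_lt_one hγ0.le hγ1
    have h2 : Filter.Tendsto (fun k : ℕ => γ ^ k * ε) Filter.atTop (nhds 0) := by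
      simpa using this.mul_const ε
    exact (h2.eventually (eventually_lt_nhds (show (0:ℝ) < δ / 2 by positivity))).exists
  refine ⟨N + K, fun n hn => ?_⟩
  have hnk : a n ≤ γ ^ (n - N) * ε + δ / 2 := by
    have := key (n - N)
    have h : N + (n - N) = n := by omega
    rwa [h] at this
  have hpow : γ ^ (n - N) ≤ γ ^ K := pow_le_pow_of_le_one hγ0.le hγ1.le (by omega)
  have hmul : γ ^ (n - N) * ε ≤ γ ^ K * ε := mul_le_mul_of_nonneg_right hpow hε.le
  have han : a n < δ := by linarith
  rw [Real.dist_eq, sub_zero, abs_of_nonneg dist_nonneg]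
  exact han
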